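/- Let A be an m×N matrix with k < spark(A) − 1 (every k+1 columns independent). Then for b drawn uniformly from the unit sphere in R^m, with probability 1 the optimal k-sparse approximation argmin_{‖x‖₀≤k} ‖Ax − b‖₂ is unique. Conversely, if k ≥ spark(A) − 1, the probability of uniqueness is strictly less than 1. -/

import Mathlib

open Finset MeasureTheory

/-- The spark of a dictionary (`⊤` if the columns are linearly independent). -/
noncomputable def spark {m N : ℕ} (A : Fin N → EuclideanSpace ℝ (Fin m)) : ℕ∞ :=
  sInf {s : ℕ∞ | ∃ S : Finset (Fin N), (S.card : ℕ∞) = s ∧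
    ¬ LinearIndependent ℝ (fun i : S => A i)}

open Metric Set RealInnerProductSpace Pointwise

section Quadric

variable {m : ℕ}

private lemma shear_meas (v : EuclideanSpace ℝ (Fin m)) :
    Measurable (fun p : ℝ × EuclideanSpace ℝ (Fin m) => (p.1, p.2 + p.1 • v)) :=
  measurable_fst.prodMk (measurable_snd.add (measurable_fst.smul_const v))

/-- The shear `(t, x) ↦ (t, x + t • v)` preserves `volume.prod volume`. -/
lemma shear_measurePreserving (v : EuclideanSpace ℝ (Fin m)) :
    MeasurePreserving (fun p : ℝ × EuclideanSpace ℝ (Fin m) => (p.1, p.2 + p.1 • v))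
      ((volume : Measure ℝ).prod volume) ((volume : Measure ℝ).prod volume) := by
  refine ⟨shear_meas v, ?_⟩
  refine Eq.symm (Measure.prod_eq fun s u hs hu => ?_)
  rw [Measure.map_apply (shear_meas v) (hs.prod hu)]
  have heq : (fun p : ℝ × EuclideanSpace ℝ (Fin m) => (p.1, p.2 + p.1 • v)) ⁻¹' s ×ˢ u
      = {p : ℝ × EuclideanSpace ℝ (Fin m) | p.1 ∈ s ∧ p.2 + p.1 • v ∈ u} := by
    ext p; simp [Set.mem_prod]
  rw [heq]
  have hms : MeasurableSet {p : ℝ × EuclideanSpace ℝ (Fin m) | p.1 ∈ s ∧ p.2 + p.1 • v ∈ u} :=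
    (hs.preimage measurable_fst).inter
      (hu.preimage (measurable_snd.add (measurable_fst.smul_const v)))
  rw [Measure.prod_apply hms]
  have hsl : ∀ t : ℝ, volume (Prod.mk t ⁻¹'
      {p : ℝ × EuclideanSpace ℝ (Fin m) | p.1 ∈ s ∧ p.2 + p.1 • v ∈ u})
      = s.indicator (fun _ => volume u) t := by
    intro t
    by_cases ht : t ∈ s
    · rw [Set.indicator_of_mem ht]
      have : Prod.mk t ⁻¹' {p : ℝ × EuclideanSpace ℝ (Fin m) | p.1 ∈ s ∧ p.2 + p.1 • v ∈ u}
          = (fun x => x + t • v) ⁻¹' u := by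
        ext x; simp [ht]
      rw [this, measure_preimage_add_right]
    · rw [Set.indicator_of_notMem ht]
      have : Prod.mk t ⁻¹' {p : ℝ × EuclideanSpace ℝ (Fin m) | p.1 ∈ s ∧ p.2 + p.1 • v ∈ u} = ∅ := by
        ext x; simp [ht]
      rw [this, measure_empty]
  simp only [hsl]
  rw [lintegral_indicator_const hs]
  exact mul_comm _ _

/-- The zero set of a quadratic form `b ↦ ⟪T b, b⟫` which is somewhere nonzero is Lebesgue-null. -/
lemma quadric_null (T : EuclideanSpace ℝ (Fin m) →L[ℝ] EuclideanSpace ℝ (Fin m))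
    (v : EuclideanSpace ℝ (Fin m)) (hv : ⟪T v, v⟫ ≠ 0) :
    volume {b : EuclideanSpace ℝ (Fin m) | ⟪T b, b⟫ = 0} = 0 := by
  set Z := {b : EuclideanSpace ℝ (Fin m) | ⟪T b, b⟫ = 0} with hZ
  have hcont : Continuous fun b : EuclideanSpace ℝ (Fin m) => ⟪T b, b⟫ :=
    Continuous.inner T.continuous continuous_id
  have hZm : MeasurableSet Z := hcont.measurable (measurableSet_singleton 0)
  set Z' : Set (ℝ × EuclideanSpace ℝ (Fin m)) := {p | p.2 + p.1 • v ∈ Z} with hZ'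
  have hZ'eq : Z' = (fun p : ℝ × EuclideanSpace ℝ (Fin m) => (p.1, p.2 + p.1 • v)) ⁻¹'
      (Set.univ ×ˢ Z) := by
    ext p; simp [hZ']
  have h1 : ((volume : Measure ℝ).prod volume) Z' = volume (Set.univ : Set ℝ) * volume Z := by
    rw [hZ'eq, (shear_measurePreserving v).measure_preimage
      (MeasurableSet.univ.prod hZm).nullMeasurableSet, Measure.prod_prod]
  have h2 : ((volume : Measure ℝ).prod volume) Z' = 0 := by
    have hswap : Z' = Prod.swap ⁻¹' {p : EuclideanSpace ℝ (Fin m) × ℝ | p.1 + p.2 • v ∈ Z} := by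
      ext p; simp [hZ', Prod.swap]
    have hm2 : MeasurableSet {p : EuclideanSpace ℝ (Fin m) × ℝ | p.1 + p.2 • v ∈ Z} :=
      hZm.preimage (measurable_fst.add (measurable_snd.smul_const v))
    rw [hswap, ← Measure.map_apply measurable_swap hm2, Measure.prod_swap, Measure.prod_apply hm2]
    have hfin : ∀ x : EuclideanSpace ℝ (Fin m),
        volume (Prod.mk x ⁻¹' {p : EuclideanSpace ℝ (Fin m) × ℝ | p.1 + p.2 • v ∈ Z}) = 0 := by
      intro x
      set a := ⟪T v, v⟫ with ha
      set bb := ⟪T x, v⟫ + ⟪T v, x⟫ with hbb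
      set c := ⟪T x, x⟫ with hc
      have hexp : ∀ t : ℝ, ⟪T (x + t • v), x + t • v⟫ = a * t ^ 2 + bb * t + c := by
        intro t
        rw [map_add, ContinuousLinearMap.map_smul]
        simp only [inner_add_left, inner_add_right, real_inner_smul_left, real_inner_smul_right,
          ha, hbb, hc]
        ring
      have hpne : (Polynomial.C a * Polynomial.X ^ 2 + Polynomial.C bb * Polynomial.X
          + Polynomial.C c : Polynomial ℝ) ≠ 0 := by
        intro h
        have h2 := congrArg (fun p : Polynomial ℝ => p.coeff 2) h
        simp [Polynomial.coeff_add, Polynomial.coeff_C_mul, Polynomial.coeff_X_pow,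
          Polynomial.coeff_C] at h2
        exact hv h2
      have hsub : Prod.mk x ⁻¹' {p : EuclideanSpace ℝ (Fin m) × ℝ | p.1 + p.2 • v ∈ Z}
          ⊆ {t : ℝ | Polynomial.IsRoot (Polynomial.C a * Polynomial.X ^ 2
            + Polynomial.C bb * Polynomial.X + Polynomial.C c) t} := by
        intro t ht
        have h0 : ⟪T (x + t • v), x + t • v⟫ = 0 := ht
        rw [hexp t] at h0
        simp only [Set.mem_setOf_eq, Polynomial.IsRoot, Polynomial.eval_add, Polynomial.eval_mul,
          Polynomial.eval_pow, Polynomial.eval_C, Polynomial.eval_X]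
        linarith
      exact measure_mono_null hsub ((Polynomial.finite_setOf_isRoot hpne).measure_zero _)
    simp only [hfin, lintegral_zero]
  rw [h2] at h1
  rcases mul_eq_zero.mp h1.symm with h | h
  · exact absurd h (by simp [Real.volume_univ])
  · exact h
end Quadric

section Projection
variable {m : ℕ}
local notation "E" => EuclideanSpace ℝ (Fin m)

/-- The orthogonal projection onto `K` as a continuous linear endomorphism. -/
noncomputable def pr (K : Submodule ℝ E) : E →L[ℝ] E :=
  K.subtypeL.comp (K.orthogonalProjectionOnto)

lemma pr_mem (K : Submodule ℝ E) (b : E) : pr K b ∈ K := (K.orthogonalProjectionOnto b).2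

lemma pr_inner (K : Submodule ℝ E) (b : E) {w : E} (hw : w ∈ K) : ⟪b - pr K b, w⟫ = 0 :=
  K.starProjection_inner_eq_zero b w hw

lemma pr_pythagoras (K : Submodule ℝ E) (b : E) {w : E} (hw : w ∈ K) :
    ‖b - w‖ ^ 2 = ‖b - pr K b‖ ^ 2 + ‖pr K b - w‖ ^ 2 := by
  have h : b - w = (b - pr K b) + (pr K b - w) := by abel
  rw [h, norm_add_sq_real, pr_inner K b (K.sub_mem (pr_mem K b) hw)]
  ring

lemma pr_dist_le (K : Submodule ℝ E) (b : E) {w : E} (hw : w ∈ K) :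
    ‖b - pr K b‖ ≤ ‖b - w‖ := by
  have h := pr_pythagoras K b hw
  nlinarith [norm_nonneg (b - pr K b), norm_nonneg (b - w), sq_nonneg ‖pr K b - w‖]

lemma pr_closest_unique (K : Submodule ℝ E) (b : E) {w : E} (hw : w ∈ K)
    (h : ‖b - w‖ = ‖b - pr K b‖) : w = pr K b := by
  have h2 := pr_pythagoras K b hw
  have hx : ‖b - w‖ ^ 2 = ‖b - pr K b‖ ^ 2 := by rw [h]
  have hz : ‖pr K b - w‖ ^ 2 = 0 := by linarith
  have h3 : ‖pr K b - w‖ = 0 := by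
    have := sq_eq_zero_iff.mp hz; exact this
  have := norm_eq_zero.mp h3
  exact (sub_eq_zero.mp this).symm

lemma pr_eq_self (K : Submodule ℝ E) {b : E} (hb : b ∈ K) : pr K b = b := by
  exact K.starProjection_eq_self_iff.mpr hb

lemma pr_eq_zero (K : Submodule ℝ E) {n : E} (hn : n ∈ Kᗮ) : pr K n = 0 := by
  simp [pr, Submodule.orthogonalProjectionOnto_apply_of_mem_orthogonal hn]

lemma pr_norm_sq (K : Submodule ℝ E) (b : E) :
    ‖b‖ ^ 2 = ‖pr K b‖ ^ 2 + ‖b - pr K b‖ ^ 2 := by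
  have h := pr_pythagoras K b K.zero_mem
  simp only [sub_zero] at h
  linarith

lemma pr_inner_self (K : Submodule ℝ E) (b : E) : ⟪pr K b, b⟫ = ‖pr K b‖ ^ 2 := by
  have h := pr_inner K b (pr_mem K b)
  have : ⟪pr K b, b - pr K b⟫ = 0 := by rwa [real_inner_comm] at h
  have hsum : pr K b + (b - pr K b) = b := by abel
  have h2 : ⟪pr K b, b⟫ = ⟪pr K b, pr K b⟫ + ⟪pr K b, b - pr K b⟫ := by
    rw [← inner_add_right, hsum]
  rw [h2, this, add_zero, real_inner_self_eq_norm_sq]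

lemma pr_mem_iff_dist_zero (K : Submodule ℝ E) (b : E) : ‖b - pr K b‖ = 0 ↔ b ∈ K := by
  constructor
  · intro h
    have : b = pr K b := by
      have := norm_eq_zero.mp h; exact sub_eq_zero.mp this
    rw [this]; exact pr_mem K b
  · intro h; rw [pr_eq_self K h]; simp

/-- The set of points equidistant from two distinct subspaces is Lebesgue-null. -/
lemma equidistant_null {K L : Submodule ℝ E} (h : K ≠ L) :
    volume {b : E | ‖b - pr K b‖ = ‖b - pr L b‖} = 0 := by
  set T : E →L[ℝ] E := pr K - pr L with hT
  have hTb : ∀ b : E, ⟪T b, b⟫ = ‖pr K b‖ ^ 2 - ‖pr L b‖ ^ 2 := by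
    intro b
    rw [hT]
    simp only [ContinuousLinearMap.sub_apply]
    rw [inner_sub_left, pr_inner_self, pr_inner_self]
  have hsub : {b : E | ‖b - pr K b‖ = ‖b - pr L b‖} ⊆ {b : E | ⟪T b, b⟫ = 0} := by
    intro b hb
    simp only [Set.mem_setOf_eq] at hb ⊢
    rw [hTb]
    have h1 := pr_norm_sq K b
    have h2 := pr_norm_sq L b
    have hsq : ‖b - pr K b‖ ^ 2 = ‖b - pr L b‖ ^ 2 := by rw [hb]
    linarith
  -- find a direction where the quadratic form is nonzero
  have hv : ∃ v : E, ⟪T v, v⟫ ≠ 0 := by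
    have key : ∀ (K' L' : Submodule ℝ E) (v : E), v ∈ K' → v ∉ L' →
        ‖pr K' v‖ ^ 2 - ‖pr L' v‖ ^ 2 > 0 := by
      intro K' L' v hvK hvL
      have h1 : pr K' v = v := pr_eq_self K' hvK
      have h2 : ‖v‖ ^ 2 = ‖pr L' v‖ ^ 2 + ‖v - pr L' v‖ ^ 2 := pr_norm_sq L' v
      have h3 : ‖v - pr L' v‖ ≠ 0 := by
        intro h0
        exact hvL ((pr_mem_iff_dist_zero L' v).mp h0)
      have h4 : 0 < ‖v - pr L' v‖ := lt_of_le_of_ne (norm_nonneg _) (Ne.symm h3)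
      rw [h1]
      nlinarith
    have hcases : ¬ K ≤ L ∨ ¬ L ≤ K := by
      by_contra hc; push_neg at hc; exact h (le_antisymm hc.1 hc.2)
    rcases hcases with hnle | hnle
    · obtain ⟨v, hvK, hvL⟩ := SetLike.not_le_iff_exists.mp hnle
      exact ⟨v, by rw [hTb]; exact ne_of_gt (key K L v hvK hvL)⟩
    · obtain ⟨v, hvL, hvK⟩ := SetLike.not_le_iff_exists.mp hnle
      exact ⟨v, by rw [hTb]; exact ne_of_lt (sub_neg.mpr (sub_pos.mp (key L K v hvL hvK)))⟩
  obtain ⟨v, hv⟩ := hv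
  exact measure_mono_null hsub (quadric_null T v hv)
end Projection

section Sphere

variable {m : ℕ}

local notation "E" => EuclideanSpace ℝ (Fin m)

/-- A cone which is Lebesgue-null meets the sphere in a `toSphere`-null set. -/
lemma toSphere_null_of_cone {C : Set E} (hCm : MeasurableSet C)
    (hcone : ∀ r : ℝ, 0 < r → ∀ x ∈ C, r • x ∈ C) (h0 : volume C = 0) :
    (volume : Measure E).toSphere {b : sphere (0 : E) 1 | (b : E) ∈ C} = 0 := by
  have hs : MeasurableSet {b : sphere (0 : E) 1 | (b : E) ∈ C} :=
    measurable_subtype_coe hCm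
  rw [Measure.toSphere_apply' _ hs]
  have hsub : (Ioo (0:ℝ) 1 • (Subtype.val '' {b : sphere (0 : E) 1 | (b : E) ∈ C})) ⊆ C := by
    rintro y hy
    rw [Set.mem_smul] at hy
    obtain ⟨r, hr, x, hx, rfl⟩ := hy
    obtain ⟨b, hb, rfl⟩ := hx
    exact hcone r hr.1 _ hb
  rw [measure_mono_null hsub h0, mul_zero]

/-- The trace on the sphere of an open set containing a point of the sphere has
  nonzero `toSphere` measure (assuming `0 < m`). -/
lemma toSphere_ne_zero_of_open (hm : 0 < m) {U : Set E} (hU : IsOpen U)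
    (b₀ : sphere (0 : E) 1) (hb₀ : (b₀ : E) ∈ U) :
    (volume : Measure E).toSphere {b : sphere (0 : E) 1 | (b : E) ∈ U} ≠ 0 := by
  have hs : MeasurableSet {b : sphere (0 : E) 1 | (b : E) ∈ U} :=
    measurable_subtype_coe hU.measurableSet
  rw [Measure.toSphere_apply' _ hs]
  set W : Set E := (ball (0:E) 1 ∩ {(0:E)}ᶜ) ∩ (fun y : E => ‖y‖⁻¹ • y) ⁻¹' U with hW
  have hWopen : IsOpen W := by
    apply ContinuousOn.isOpen_inter_preimage ?_ (isOpen_ball.inter isOpen_compl_singleton) hU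
    apply ContinuousOn.fun_smul ?_ continuousOn_id
    exact ContinuousOn.inv₀ (continuous_norm.continuousOn)
      (fun y hy => norm_ne_zero_iff.mpr hy.2)
  have hWsub : W ⊆ Ioo (0:ℝ) 1 • (Subtype.val '' {b : sphere (0 : E) 1 | (b : E) ∈ U}) := by
    rintro y ⟨⟨hby, h0y⟩, hUy⟩
    have hy0 : y ≠ 0 := h0y
    have hny : 0 < ‖y‖ := norm_pos_iff.mpr hy0
    have hn1 : ‖y‖ < 1 := by simpa [mem_ball, dist_zero_right] using hby
    have hunit : ‖(‖y‖⁻¹ • y)‖ = 1 := by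
      rw [norm_smul, norm_inv, norm_norm, inv_mul_cancel₀ (ne_of_gt hny)]
    refine Set.mem_smul.mpr ⟨‖y‖, ⟨hny, hn1⟩, ‖y‖⁻¹ • y, ?_, ?_⟩
    · exact ⟨⟨‖y‖⁻¹ • y, by simpa [mem_sphere_iff_norm] using hunit⟩, hUy, rfl⟩
    · rw [smul_smul, mul_inv_cancel₀ (ne_of_gt hny), one_smul]
  have hWne : W.Nonempty := by
    refine ⟨(2:ℝ)⁻¹ • (b₀ : E), ⟨⟨?_, ?_⟩, ?_⟩⟩
    · have : ‖(b₀ : E)‖ = 1 := by simpa [mem_sphere_iff_norm] using b₀.2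
      simp [mem_ball, dist_zero_right, norm_smul, this]; norm_num
    · have hb1 : ‖(b₀ : E)‖ = 1 := by simpa [mem_sphere_iff_norm] using b₀.2
      simp only [Set.mem_compl_iff, Set.mem_singleton_iff]
      intro h
      have : ‖((2:ℝ)⁻¹ • (b₀ : E))‖ = 0 := by rw [h]; simp
      rw [norm_smul, hb1] at this
      norm_num at this
    · have hb1 : ‖(b₀ : E)‖ = 1 := by simpa [mem_sphere_iff_norm] using b₀.2
      have : ‖(2:ℝ)⁻¹ • (b₀ : E)‖ = 2⁻¹ := by rw [norm_smul, hb1]; norm_num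
      simp only [Set.mem_preimage, this]
      have : ((2:ℝ)⁻¹)⁻¹ • ((2:ℝ)⁻¹ • (b₀:E)) = (b₀ : E) := by
        rw [smul_smul]; norm_num
      rw [this]; exact hb₀
  have hpos : volume W ≠ 0 := (hWopen.measure_ne_zero volume hWne)
  intro hcontra
  rcases mul_eq_zero.mp hcontra with h | h
  · have : Module.finrank ℝ (EuclideanSpace ℝ (Fin m)) = m := finrank_euclideanSpace_fin
    rw [this] at h
    simp at h
    omega
  · exact hpos (measure_mono_null hWsub h)

/-- From a nonzero finite-dimensional subspace one can pick a unit vector avoiding finitely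
many subspaces none of which contains `V`. -/
lemma exists_unit_avoid (V : Submodule ℝ E) (hV : V ≠ ⊥) (𝒲 : Finset (Submodule ℝ E))
    (h : ∀ W ∈ 𝒲, ¬ V ≤ W) :
    ∃ z : E, z ∈ V ∧ ‖z‖ = 1 ∧ ∀ W ∈ 𝒲, z ∉ W := by
  classical
  set 𝒲' : Finset (Submodule ℝ E) := insert ⊥ 𝒲 with h𝒲'
  have h' : ∀ W ∈ 𝒲', ¬ V ≤ W := by
    intro W hW
    rcases Finset.mem_insert.mp hW with rfl | hW
    · simpa [le_bot_iff] using hV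
    · exact h W hW
  set d := Module.finrank ℝ V with hd
  let L := (stdOrthonormalBasis ℝ V).repr
  -- the pullbacks
  have key : ∃ x : EuclideanSpace ℝ (Fin d), ∀ W ∈ 𝒲', ((L.symm x : V) : E) ∉ W := by
    by_contra hc
    push_neg at hc
    have hcover : (Set.univ : Set (EuclideanSpace ℝ (Fin d))) ⊆
        ⋃ W ∈ 𝒲', ((W.comap (V.subtype.comp L.symm.toLinearEquiv.toLinearMap)) : Set (EuclideanSpace ℝ (Fin d))) := by
      intro x _
      obtain ⟨W, hW, hx⟩ := hc x
      exact Set.mem_biUnion hW hx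
    have hnull : volume (⋃ W ∈ 𝒲', ((W.comap (V.subtype.comp L.symm.toLinearEquiv.toLinearMap)) : Set (EuclideanSpace ℝ (Fin d)))) = 0 := by
      refine measure_biUnion_null_iff 𝒲'.countable_toSet |>.mpr ?_
      intro W hW
      apply Measure.addHaar_submodule
      intro htop
      obtain ⟨v, hvV, hvW⟩ := SetLike.not_le_iff_exists.mp (h' W hW)
      have : (L ⟨v, hvV⟩) ∈ (W.comap (V.subtype.comp L.symm.toLinearEquiv.toLinearMap)) := by
        rw [htop]; trivial
      simp only [Submodule.mem_comap, LinearMap.comp_apply] at this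
      rw [LinearEquiv.coe_toLinearMap] at this
      have hLL : L.symm.toLinearEquiv (L ⟨v, hvV⟩) = ⟨v, hvV⟩ := by
        simp
      rw [hLL] at this
      exact hvW this
    have : volume (Set.univ : Set (EuclideanSpace ℝ (Fin d))) = 0 :=
      measure_mono_null hcover hnull
    exact (isOpen_univ.measure_ne_zero volume Set.univ_nonempty) this
  obtain ⟨x, hx⟩ := key
  set z : E := ((L.symm x : V) : E) with hz
  have hzV : z ∈ V := (L.symm x : V).2
  have hz0 : z ≠ 0 := by
    intro h0
    apply hx ⊥ (Finset.mem_insert_self _ _)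
    simp [h0]
  refine ⟨‖z‖⁻¹ • z, V.smul_mem _ hzV, ?_, ?_⟩
  · rw [norm_smul, norm_inv, norm_norm, inv_mul_cancel₀ (norm_ne_zero_iff.mpr hz0)]
  · intro W hW hmem
    apply hx W (Finset.mem_insert_of_mem hW)
    have : (‖z‖ : ℝ) • (‖z‖⁻¹ • z) ∈ W := W.smul_mem _ hmem
    rwa [smul_smul, mul_inv_cancel₀ (norm_ne_zero_iff.mpr hz0), one_smul] at this
end Sphere

section Dictionary
variable {m N : ℕ}

variable (A : Fin N → EuclideanSpace ℝ (Fin m))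

/-- Span of the columns indexed by `S`. -/
noncomputable def Vs (S : Finset (Fin N)) : Submodule ℝ (EuclideanSpace ℝ (Fin m)) :=
  Submodule.span ℝ (A '' (S : Set (Fin N)))

/-- Support of a coefficient vector, as a `Finset`. -/
noncomputable def suppF (x : Fin N → ℝ) : Finset (Fin N) := Finset.univ.filter (fun i => x i ≠ 0)

lemma mem_suppF {x : Fin N → ℝ} {i : Fin N} : i ∈ suppF x ↔ x i ≠ 0 := by
  simp [suppF]

lemma ncard_eq_suppF (x : Fin N → ℝ) : {i | x i ≠ 0}.ncard = (suppF x).card := by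
  have : {i | x i ≠ 0} = ↑(suppF x) := by ext i; simp [suppF]
  rw [this, Set.ncard_coe_finset]

lemma sum_eq_sum_suppF (x : Fin N → ℝ) {S : Finset (Fin N)} (h : ∀ i, x i ≠ 0 → i ∈ S) :
    ∑ i, x i • A i = ∑ i ∈ S, x i • A i := by
  refine (Finset.sum_subset (Finset.subset_univ S) ?_).symm
  intro i _ hiS
  have : x i = 0 := by by_contra hx; exact hiS (h i hx)
  simp [this]

lemma sum_smul_mem (x : Fin N → ℝ) (S : Finset (Fin N)) (h : ∀ i, x i ≠ 0 → i ∈ S) :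
    ∑ i, x i • A i ∈ Vs A S := by
  rw [sum_eq_sum_suppF A x h]
  refine Submodule.sum_mem _ fun i hi => Submodule.smul_mem _ _ ?_
  exact Submodule.subset_span ⟨i, hi, rfl⟩

lemma exists_rep (S : Finset (Fin N)) (z : EuclideanSpace ℝ (Fin m)) (hz : z ∈ Vs A S) :
    ∃ x : Fin N → ℝ, (∀ i, x i ≠ 0 → i ∈ S) ∧ ∑ i, x i • A i = z := by
  rw [Vs, Finsupp.mem_span_image_iff_linearCombination] at hz
  obtain ⟨l, hl, hsum⟩ := hz
  refine ⟨fun i => l i, ?_, ?_⟩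
  · intro i hi
    exact hl (Finsupp.mem_support_iff.mpr hi)
  · rw [← hsum, Finsupp.linearCombination_apply, Finsupp.sum_fintype]
    simp

lemma indep_zero {S : Finset (Fin N)} (hind : LinearIndependent ℝ (fun i : S => A i))
    {x : Fin N → ℝ} (hsupp : ∀ i, x i ≠ 0 → i ∈ S) (hsum : ∑ i, x i • A i = 0) : x = 0 := by
  have hS : ∑ i : S, x i • A i = 0 := by
    rw [Finset.sum_coe_sort S (fun i => x i • A i), ← sum_eq_sum_suppF A x hsupp, hsum]
  have := Fintype.linearIndependent_iff.mp hind (fun i : S => x i) hS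
  funext i
  by_cases hi : i ∈ S
  · exact this ⟨i, hi⟩
  · by_contra hx; exact hi (hsupp i hx)

lemma dep_of_kernel {S : Finset (Fin N)} {x : Fin N → ℝ} (hsupp : ∀ i, x i ≠ 0 → i ∈ S)
    (hsum : ∑ i, x i • A i = 0) (hx : x ≠ 0) :
    ¬ LinearIndependent ℝ (fun i : S => A i) := fun hind => hx (indep_zero A hind hsupp hsum)

lemma dep_exists {S : Finset (Fin N)} (hdep : ¬ LinearIndependent ℝ (fun i : S => A i)) :
    ∃ x : Fin N → ℝ, (∀ i, x i ≠ 0 → i ∈ S) ∧ ∑ i, x i • A i = 0 ∧ x ≠ 0 := by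
  classical
  obtain ⟨g, hsum, i₀, hg⟩ := Fintype.not_linearIndependent_iff.mp hdep
  set x : Fin N → ℝ := fun i => if h : i ∈ S then g ⟨i, h⟩ else 0 with hx
  have hxsupp : ∀ i, x i ≠ 0 → i ∈ S := by
    intro i hi
    by_contra h
    simp [hx, h] at hi
  refine ⟨x, hxsupp, ?_, ?_⟩
  · rw [sum_eq_sum_suppF A x hxsupp, ← Finset.sum_attach S (fun i => x i • A i), ← hsum,
      Finset.univ_eq_attach]
    apply Finset.sum_congr rfl
    intro i _
    have hxi : x ↑i = g i := by simp [hx, i.2]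
    rw [hxi]
  · intro h0
    exact hg (by simpa [hx, i₀.2] using congrFun h0 i₀.1)

lemma spark_le {S : Finset (Fin N)} (hdep : ¬ LinearIndependent ℝ (fun i : S => A i)) :
    spark A ≤ (S.card : ℕ∞) := sInf_le ⟨S, rfl, hdep⟩

lemma indep_of_card_lt {S : Finset (Fin N)} (hcard : (S.card : ℕ∞) < spark A) :
    LinearIndependent ℝ (fun i : S => A i) := by
  by_contra hdep
  exact absurd (spark_le A hdep) (not_le.mpr hcard)

/-- If the spark is finite, there is a minimal dependent set: it is dependent, realizes the
spark, and all subsets of smaller cardinality are independent automatically. -/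
lemma spark_attained (hne : spark A ≠ ⊤) :
    ∃ S : Finset (Fin N), (S.card : ℕ∞) = spark A ∧ ¬ LinearIndependent ℝ (fun i : S => A i) := by
  classical
  set T : Set ℕ := {n : ℕ | ∃ S : Finset (Fin N), S.card = n ∧ ¬ LinearIndependent ℝ (fun i : S => A i)} with hT
  have hTne : T.Nonempty := by
    by_contra hc
    rw [Set.not_nonempty_iff_eq_empty] at hc
    apply hne
    rw [spark]
    refine (congrArg sInf (?_ : _ = (∅ : Set ℕ∞))).trans sInf_empty
    rw [Set.eq_empty_iff_forall_notMem]
    rintro s ⟨S, hcard, hdep⟩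
    have : S.card ∈ T := ⟨S, rfl, hdep⟩
    rw [hc] at this
    exact this
  obtain ⟨S, hcard, hdep⟩ := Nat.sInf_mem hTne
  refine ⟨S, le_antisymm (le_sInf ?_) (spark_le A hdep), hdep⟩
  rintro s ⟨S', rfl, hdep'⟩
  have h1 : sInf T ≤ S'.card := Nat.sInf_le ⟨S', rfl, hdep'⟩
  have h2 : S.card ≤ S'.card := by rw [hcard]; exact h1
  exact_mod_cast h2

lemma forward_unique (A : Fin N → EuclideanSpace ℝ (Fin m)) (k : ℕ)
    (hindep : ∀ S : Finset (Fin N), S.card ≤ k + 1 → LinearIndependent ℝ (fun i : S => A i))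
    (b : EuclideanSpace ℝ (Fin m))
    (hb : ∀ S T : Finset (Fin N), S.card ≤ k → T.card ≤ k → Vs A S ≠ Vs A T →
      ‖b - pr (Vs A S) b‖ ≠ ‖b - pr (Vs A T) b‖) :
    ∃! x : Fin N → ℝ, {i | x i ≠ 0}.ncard ≤ k ∧
      ∀ y : Fin N → ℝ, {i | y i ≠ 0}.ncard ≤ k →
        ‖(∑ i, x i • A i) - b‖ ≤ ‖(∑ i, y i • A i) - b‖ := by
  classical
  set 𝒮 : Finset (Finset (Fin N)) := Finset.univ.filter (fun S => S.card ≤ k) with h𝒮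
  have h𝒮mem : ∀ {S : Finset (Fin N)}, S ∈ 𝒮 ↔ S.card ≤ k := by
    intro S; simp [h𝒮]
  have h𝒮ne : 𝒮.Nonempty := ⟨∅, h𝒮mem.mpr (by simp)⟩
  obtain ⟨S₀, hS₀mem, hS₀min⟩ :=
    𝒮.exists_min_image (fun S => ‖b - pr (Vs A S) b‖) h𝒮ne
  set z₀ := pr (Vs A S₀) b with hz₀
  obtain ⟨x₀, hx₀supp, hx₀sum⟩ := exists_rep A S₀ z₀ (pr_mem _ b)
  -- kernel helper : if A i lies in the span of S with small card, contradiction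
  have hnotmem : ∀ (S : Finset (Fin N)) (i : Fin N), S.card ≤ k → i ∉ S →
      A i ∉ Vs A S := by
    intro S i hcard hiS hmem
    obtain ⟨c, hcsupp, hcsum⟩ := exists_rep A S (A i) hmem
    set w : Fin N → ℝ := fun j => c j - (if j = i then 1 else 0) with hw
    have hwsupp : ∀ j, w j ≠ 0 → j ∈ insert i S := by
      intro j hj
      by_cases hji : j = i
      · simp [hji]
      · refine Finset.mem_insert_of_mem (hcsupp j ?_)
        intro hcj
        apply hj
        simp [hw, hcj, hji]
    have hwsum : ∑ j, w j • A j = 0 := by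
      simp only [hw, sub_smul, ite_smul, one_smul, zero_smul]
      rw [Finset.sum_sub_distrib, hcsum]
      simp [Finset.sum_ite_eq']
    have hwne : w ≠ 0 := by
      intro h0
      have := congrFun h0 i
      have hci : c i = 0 := by
        by_contra hci
        exact hiS (hcsupp i hci)
      simp [hw, hci] at this
    have hdep := dep_of_kernel A hwsupp hwsum hwne
    have hcard' : (insert i S).card ≤ k + 1 := by
      calc (insert i S).card ≤ S.card + 1 := Finset.card_insert_le _ _
      _ ≤ k + 1 := by omega
    exact hdep (hindep _ hcard')
  -- the candidate
  have hx₀card : {i | x₀ i ≠ 0}.ncard ≤ k := by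
    rw [ncard_eq_suppF]
    calc (suppF x₀).card ≤ S₀.card := Finset.card_le_card (fun i hi => hx₀supp i (mem_suppF.mp hi))
    _ ≤ k := h𝒮mem.mp hS₀mem
  have hx₀min : ∀ y : Fin N → ℝ, {i | y i ≠ 0}.ncard ≤ k →
      ‖(∑ i, x₀ i • A i) - b‖ ≤ ‖(∑ i, y i • A i) - b‖ := by
    intro y hy
    have hTcard : (suppF y).card ≤ k := by rw [← ncard_eq_suppF]; exact hy
    have hAy : ∑ i, y i • A i ∈ Vs A (suppF y) :=
      sum_smul_mem A y (suppF y) (fun i hi => mem_suppF.mpr hi)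
    calc ‖(∑ i, x₀ i • A i) - b‖ = ‖b - z₀‖ := by rw [hx₀sum, norm_sub_rev]
    _ ≤ ‖b - pr (Vs A (suppF y)) b‖ := hS₀min _ (h𝒮mem.mpr hTcard)
    _ ≤ ‖b - ∑ i, y i • A i‖ := pr_dist_le _ b hAy
    _ = ‖(∑ i, y i • A i) - b‖ := norm_sub_rev _ _
  refine ⟨x₀, ⟨hx₀card, hx₀min⟩, ?_⟩
  rintro y ⟨hysp, hymin⟩
  have hTcard : (suppF y).card ≤ k := by rw [← ncard_eq_suppF]; exact hysp
  have hAy : ∑ i, y i • A i ∈ Vs A (suppF y) :=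
    sum_smul_mem A y (suppF y) (fun i hi => mem_suppF.mpr hi)
  have heq : ‖(∑ i, y i • A i) - b‖ = ‖(∑ i, x₀ i • A i) - b‖ :=
    le_antisymm (hymin x₀ hx₀card) (hx₀min y hysp)
  have hd1 : ‖b - pr (Vs A (suppF y)) b‖ ≤ ‖b - z₀‖ := by
    calc ‖b - pr (Vs A (suppF y)) b‖ ≤ ‖b - ∑ i, y i • A i‖ := pr_dist_le _ b hAy
    _ = ‖(∑ i, y i • A i) - b‖ := norm_sub_rev _ _
    _ = ‖(∑ i, x₀ i • A i) - b‖ := heq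
    _ = ‖b - z₀‖ := by rw [hx₀sum, norm_sub_rev]
  have hd2 : ‖b - z₀‖ ≤ ‖b - pr (Vs A (suppF y)) b‖ := hS₀min _ (h𝒮mem.mpr hTcard)
  have hVeq : Vs A (suppF y) = Vs A S₀ := by
    by_contra hne
    exact hb _ _ hTcard (h𝒮mem.mp hS₀mem) hne (le_antisymm hd1 hd2)
  have hyz₀ : ∑ i, y i • A i = z₀ := by
    rw [hVeq] at hAy
    refine pr_closest_unique (Vs A S₀) b hAy ?_
    rw [norm_sub_rev, heq, hx₀sum, norm_sub_rev]
  have hsub : suppF y ⊆ S₀ := by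
    intro i hi
    by_contra hiS₀
    apply hnotmem S₀ i (h𝒮mem.mp hS₀mem) hiS₀
    have hAi : A i ∈ Vs A (suppF y) := Submodule.subset_span ⟨i, hi, rfl⟩
    rwa [hVeq] at hAi
  -- y = x₀ via independence of S₀
  have hdind := hindep S₀ (le_trans (h𝒮mem.mp hS₀mem) (by omega))
  have hdiff : (fun j => y j - x₀ j) = 0 := by
    apply indep_zero A hdind (x := fun j => y j - x₀ j)
    · intro j hj
      rcases sub_ne_zero.mp (by simpa using hj) |>.lt_or_gt with h | h
      all_goals {
        by_cases hyj : y j ≠ 0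
        · exact hsub (mem_suppF.mpr hyj)
        · push_neg at hyj
          apply hx₀supp j
          intro hx0j
          simp [hyj, hx0j] at hj }
    · simp only [sub_smul]
      rw [Finset.sum_sub_distrib, hyz₀, hx₀sum, sub_self]
  funext j
  have := congrFun hdiff j
  simp at this
  linarith [this]

/-- If some column is a combination of others with small support, the span is unchanged
after erasing it. -/
lemma span_erase_eq (A : Fin N → EuclideanSpace ℝ (Fin m)) {D : Finset (Fin N)}
    {c : Fin N → ℝ} (hcsupp : ∀ i, c i ≠ 0 → i ∈ D) (hcsum : ∑ i, c i • A i = 0)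
    {j : Fin N} (hj : c j ≠ 0) : Vs A (D.erase j) = Vs A D := by
  have hjD : j ∈ D := hcsupp j hj
  apply le_antisymm
  · exact Submodule.span_mono (Set.image_mono (by exact_mod_cast Finset.erase_subset j D))
  · rw [Vs, Submodule.span_le]
    rintro _ ⟨i, hiD, rfl⟩
    by_cases hij : i = j
    · subst hij
      have hsplit : ∑ l ∈ D, c l • A l = 0 := by
        rw [← sum_eq_sum_suppF A c hcsupp]; exact hcsum
      have : c i • A i + ∑ l ∈ D.erase i, c l • A l = 0 := by
        rw [Finset.add_sum_erase D (fun l => c l • A l) hiD]; exact hsplit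
      have hAi : A i = (-(c i)⁻¹) • ∑ l ∈ D.erase i, c l • A l := by
        have h1 : c i • A i = -∑ l ∈ D.erase i, c l • A l := by
          rw [eq_neg_iff_add_eq_zero]; exact this
        rw [neg_smul, ← smul_neg, ← h1, smul_smul, inv_mul_cancel₀ hj, one_smul]
      rw [hAi]
      refine Submodule.smul_mem _ _ (Submodule.sum_mem _ fun l hl => ?_)
      exact Submodule.smul_mem _ _
        (Submodule.subset_span ⟨l, by exact_mod_cast hl, rfl⟩)
    · exact Submodule.subset_span ⟨i, Finset.mem_erase.mpr ⟨hij, hiD⟩, rfl⟩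

/-- Key construction for the reverse direction. -/
lemma reverse_setup (A : Fin N → EuclideanSpace ℝ (Fin m)) (k : ℕ)
    (hA0 : ∀ i, A i ≠ 0) (hspark : spark A ≤ ((k : ℕ∞) + 1)) :
    ∃ S : Finset (Fin N), S.card ≤ k ∧ ∃ V₀ : Submodule ℝ (EuclideanSpace ℝ (Fin m)),
      V₀ < Vs A S ∧
      (∀ T : Finset (Fin N), T.card ≤ k → Vs A T = Vs A S ∨ ¬ (Vs A S ≤ Vs A T)) ∧
      (∀ z : EuclideanSpace ℝ (Fin m), z ∈ Vs A S → z ∉ V₀ →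
        ∃ x x' : Fin N → ℝ, x ≠ x' ∧ {i | x i ≠ 0}.ncard ≤ k ∧ {i | x' i ≠ 0}.ncard ≤ k ∧
          ∑ i, x i • A i = z ∧ ∑ i, x' i • A i = z) := by
  classical
  -- a minimal dependent set
  have hne : spark A ≠ ⊤ := by
    intro h
    rw [h, top_le_iff] at hspark
    have h2 : ((k + 1 : ℕ) : ℕ∞) = ⊤ := by push_cast; exact hspark
    exact ENat.coe_ne_top _ h2
  obtain ⟨D, hDcard, hDdep⟩ := spark_attained A hne
  have hDk : D.card ≤ k + 1 := by
    have : (D.card : ℕ∞) ≤ ((k : ℕ∞) + 1) := hDcard ▸ hspark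
    exact_mod_cast this
  obtain ⟨c, hcsupp, hcsum, hcne⟩ := dep_exists A hDdep
  obtain ⟨j₀, hj₀⟩ : ∃ j, c j ≠ 0 := by
    by_contra h; push_neg at h; exact hcne (funext fun i => h i)
  have hbase : Vs A (D.erase j₀) = Vs A D := span_erase_eq A hcsupp hcsum hj₀
  have hbasecard : (D.erase j₀).card ≤ k := by
    rw [Finset.card_erase_of_mem (hcsupp j₀ hj₀)]; omega
  -- maximal spanning subset
  set 𝒮 : Finset (Finset (Fin N)) :=
    Finset.univ.filter (fun S => S.card ≤ k ∧ Vs A D ≤ Vs A S) with h𝒮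
  have h𝒮ne : 𝒮.Nonempty := ⟨D.erase j₀, by simp [h𝒮, hbasecard, hbase.ge, hbase.le]⟩
  obtain ⟨S, hSmem, hSmax⟩ :=
    𝒮.exists_max_image (fun S => Module.finrank ℝ (Vs A S)) h𝒮ne
  have hScard : S.card ≤ k := by
    have := (Finset.mem_filter.mp hSmem).2; exact this.1
  have hWS : Vs A D ≤ Vs A S := (Finset.mem_filter.mp hSmem).2.2
  have hmax : ∀ T : Finset (Fin N), T.card ≤ k → Vs A T = Vs A S ∨ ¬ (Vs A S ≤ Vs A T) := by
    intro T hT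
    by_cases hle : Vs A S ≤ Vs A T
    · left
      have hWT : Vs A D ≤ Vs A T := le_trans hWS hle
      have hfr : Module.finrank ℝ (Vs A T) ≤ Module.finrank ℝ (Vs A S) :=
        hSmax T (by simp [h𝒮, hT, hWT])
      exact (Submodule.eq_of_le_of_finrank_le hle hfr).symm
    · right; exact hle
  -- S is nonbot
  have hSnebot : Vs A S ≠ ⊥ := by
    intro h
    have : A j₀ ∈ Vs A S := hWS (Submodule.subset_span ⟨j₀, hcsupp j₀ hj₀, rfl⟩)
    rw [h] at this
    exact hA0 j₀ (by simpa using this)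
  by_cases hSind : LinearIndependent ℝ (fun i : S => A i)
  · -- independent case : exchange a column
    obtain ⟨d, hdD, hdS⟩ : ∃ d ∈ D, d ∉ S := by
      by_contra h
      push_neg at h
      apply hcne
      exact indep_zero A hSind (fun i hi => h i (hcsupp i hi)) hcsum
    have hAd : A d ∈ Vs A S := hWS (Submodule.subset_span ⟨d, hdD, rfl⟩)
    obtain ⟨g, hgsupp, hgsum⟩ := exists_rep A S (A d) hAd
    obtain ⟨e, hge⟩ : ∃ e, g e ≠ 0 := by
      by_contra h
      push_neg at h
      apply hA0 d
      rw [← hgsum]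
      exact Finset.sum_eq_zero (fun i _ => by rw [h i, zero_smul])
    have heS : e ∈ S := hgsupp e hge
    have hgd : g d = 0 := by
      by_contra h; exact hdS (hgsupp d h)
    have hed : e ≠ d := fun h => hge (h ▸ hgd)
    -- the kernel vector w
    set w : Fin N → ℝ := fun j => (if j = d then 1 else 0) - g j with hw
    have hwsum : ∑ i, w i • A i = 0 := by
      simp only [hw, sub_smul, ite_smul, one_smul, zero_smul]
      rw [Finset.sum_sub_distrib, hgsum]
      simp [Finset.sum_ite_eq']
    have hwe : w e = -g e := by simp [hw, hed]
    have hwsupp : ∀ j, w j ≠ 0 → j ∈ insert d S := by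
      intro j hj
      by_cases hjd : j = d
      · simp [hjd]
      · refine Finset.mem_insert_of_mem (hgsupp j ?_)
        intro hgj
        exact hj (by simp [hw, hjd, hgj])
    -- V₀
    refine ⟨S, hScard, Vs A (S.erase e), ?_, hmax, ?_⟩
    · refine lt_of_le_of_ne
        (Submodule.span_mono (Set.image_mono (by exact_mod_cast Finset.erase_subset e S))) ?_
      intro hcontra
      have hAe : A e ∈ Vs A (S.erase e) := by
        rw [hcontra]; exact Submodule.subset_span ⟨e, heS, rfl⟩
      obtain ⟨h', hh'supp, hh'sum⟩ := exists_rep A (S.erase e) (A e) hAe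
      set u : Fin N → ℝ := fun j => h' j - (if j = e then 1 else 0) with hu
      have husum : ∑ i, u i • A i = 0 := by
        simp only [hu, sub_smul, ite_smul, one_smul, zero_smul]
        rw [Finset.sum_sub_distrib, hh'sum]
        simp [Finset.sum_ite_eq']
      have husupp : ∀ j, u j ≠ 0 → j ∈ S := by
        intro j hj
        by_cases hje : j = e
        · exact hje ▸ heS
        · have : h' j ≠ 0 := fun h0 => hj (by simp [hu, hje, h0])
          exact Finset.mem_of_mem_erase (hh'supp j this)
      have hune : u ≠ 0 := by
        intro h0
        have := congrFun h0 e
        have hh'e : h' e = 0 := by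
          by_contra hne'
          exact absurd (hh'supp e hne') (Finset.notMem_erase e S)
        simp [hu, hh'e] at this
      exact dep_of_kernel A husupp husum hune hSind
    · -- two representations
      intro z hz hznot
      obtain ⟨x, hxsupp, hxsum⟩ := exists_rep A S z hz
      have hxe : x e ≠ 0 := by
        intro h0
        apply hznot
        rw [← hxsum]
        refine sum_smul_mem A x (S.erase e) ?_
        intro i hi
        refine Finset.mem_erase.mpr ⟨fun hie => ?_, hxsupp i hi⟩
        rw [hie] at hi; exact hi h0
      set t : ℝ := x e / w e with ht
      set x' : Fin N → ℝ := fun j => x j - t * w j with hx'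
      have hx'e : x' e = 0 := by
        simp only [hx', ht, hwe]
        field_simp
        ring
      have hx'sum : ∑ i, x' i • A i = z := by
        simp only [hx', sub_smul, mul_smul]
        rw [Finset.sum_sub_distrib, hxsum, ← Finset.smul_sum, hwsum, smul_zero, sub_zero]
      have hx'supp : ∀ j, x' j ≠ 0 → j ∈ (insert d S).erase e := by
        intro j hj
        refine Finset.mem_erase.mpr ⟨fun hje => hj (hje ▸ hx'e), ?_⟩
        by_cases hxj : x j ≠ 0
        · exact Finset.mem_insert_of_mem (hxsupp j hxj)
        · push_neg at hxj
          have : w j ≠ 0 := by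
            intro h0
            exact hj (by simp [hx', hxj, h0])
          exact hwsupp j this
      have hcard' : ((insert d S).erase e).card ≤ k := by
        rw [Finset.card_erase_of_mem (Finset.mem_insert_of_mem heS)]
        have := Finset.card_insert_le d S
        omega
      refine ⟨x, x', ?_, ?_, ?_, hxsum, hx'sum⟩
      · intro h
        apply hxe
        rw [h]
        exact hx'e
      · rw [ncard_eq_suppF]
        exact le_trans (Finset.card_le_card fun i hi => hxsupp i (mem_suppF.mp hi)) hScard
      · rw [ncard_eq_suppF]
        exact le_trans (Finset.card_le_card fun i hi => hx'supp i (mem_suppF.mp hi)) hcard'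
  · -- dependent case : add a kernel vector
    obtain ⟨u, husupp, husum, hune⟩ := dep_exists A hSind
    refine ⟨S, hScard, ⊥, bot_lt_iff_ne_bot.mpr hSnebot, hmax, ?_⟩
    intro z hz _
    obtain ⟨x, hxsupp, hxsum⟩ := exists_rep A S z hz
    refine ⟨x, fun j => x j + u j, ?_, ?_, ?_, hxsum, ?_⟩
    · intro h
      apply hune
      funext j
      have h2 := congrFun h j
      simp only [Pi.zero_apply]
      linarith [h2.symm.le, h2.le]
    · rw [ncard_eq_suppF]
      exact le_trans (Finset.card_le_card fun i hi => hxsupp i (mem_suppF.mp hi)) hScard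
    · rw [ncard_eq_suppF]
      refine le_trans (Finset.card_le_card fun i hi => ?_) hScard
      have hi' := mem_suppF.mp hi
      by_cases hxi : x i ≠ 0
      · exact hxsupp i hxi
      · push_neg at hxi
        refine husupp i ?_
        intro h0
        exact hi' (by simp [hxi, h0])
    · simp only [add_smul]
      rw [Finset.sum_add_distrib, hxsum, husum, add_zero]
end Dictionary

section Assembly

variable {m N : ℕ}

lemma forward_null (A : Fin N → EuclideanSpace ℝ (Fin m)) (k : ℕ)
    (hindep : ∀ S : Finset (Fin N), S.card ≤ k + 1 → LinearIndependent ℝ (fun i : S => A i)) :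
    (volume : Measure (EuclideanSpace ℝ (Fin m))).toSphere
      {b : Metric.sphere (0 : EuclideanSpace ℝ (Fin m)) 1 |
        ¬ ∃! x : Fin N → ℝ, {i | x i ≠ 0}.ncard ≤ k ∧
          ∀ y : Fin N → ℝ, {i | y i ≠ 0}.ncard ≤ k →
            ‖(∑ i, x i • A i) - (b : EuclideanSpace ℝ (Fin m))‖ ≤
              ‖(∑ i, y i • A i) - (b : EuclideanSpace ℝ (Fin m))‖} = 0 := by
  classical
  set pairs : Finset (Finset (Fin N) × Finset (Fin N)) :=
    Finset.univ.filter (fun p => p.1.card ≤ k ∧ p.2.card ≤ k ∧ Vs A p.1 ≠ Vs A p.2) with hpairs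
  set BadE : Set (EuclideanSpace ℝ (Fin m)) :=
    ⋃ p ∈ pairs, {b : EuclideanSpace ℝ (Fin m) |
      ‖b - pr (Vs A p.1) b‖ = ‖b - pr (Vs A p.2) b‖} with hBadE
  have hBadm : MeasurableSet BadE := by
    refine Set.Finite.measurableSet_biUnion pairs.finite_toSet (fun p _ => ?_)
    have : IsClosed {b : EuclideanSpace ℝ (Fin m) |
        ‖b - pr (Vs A p.1) b‖ = ‖b - pr (Vs A p.2) b‖} := by
      apply isClosed_eq
      · exact (continuous_id.sub (pr (Vs A p.1)).continuous).norm
      · exact (continuous_id.sub (pr (Vs A p.2)).continuous).norm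
    exact this.measurableSet
  have hcone : ∀ r : ℝ, 0 < r → ∀ x ∈ BadE, r • x ∈ BadE := by
    intro r hr x hx
    rw [hBadE, Set.mem_iUnion₂] at hx ⊢
    obtain ⟨p, hp, hxp⟩ := hx
    refine ⟨p, hp, ?_⟩
    simp only [Set.mem_setOf_eq] at hxp ⊢
    have hsc : ∀ K : Submodule ℝ (EuclideanSpace ℝ (Fin m)),
        ‖r • x - pr K (r • x)‖ = r * ‖x - pr K x‖ := by
      intro K
      rw [ContinuousLinearMap.map_smul, ← smul_sub, norm_smul, Real.norm_eq_abs, abs_of_pos hr]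
    rw [hsc, hsc, hxp]
  have hnull : volume BadE = 0 := by
    refine (measure_biUnion_null_iff pairs.countable_toSet).mpr (fun p hp => ?_)
    have hne : Vs A p.1 ≠ Vs A p.2 := by
      rw [hpairs] at hp
      exact (Finset.mem_filter.mp hp).2.2.2
    exact equidistant_null hne
  have hsph := toSphere_null_of_cone hBadm hcone hnull
  refine measure_mono_null ?_ hsph
  intro b hb
  simp only [Set.mem_setOf_eq]
  by_contra hbBad
  apply hb
  apply forward_unique A k hindep
  intro S T hS hT hVne heqd
  apply hbBad
  rw [hBadE, Set.mem_iUnion₂]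
  exact ⟨(S, T), by simp [hpairs, hS, hT, hVne], heqd⟩

lemma reverse_nonzero (hm : 0 < m) (A : Fin N → EuclideanSpace ℝ (Fin m)) (k : ℕ)
    (hA0 : ∀ i, A i ≠ 0) (hspark : spark A ≤ ((k : ℕ∞) + 1)) :
    (volume : Measure (EuclideanSpace ℝ (Fin m))).toSphere
      {b : Metric.sphere (0 : EuclideanSpace ℝ (Fin m)) 1 |
        ¬ ∃! x : Fin N → ℝ, {i | x i ≠ 0}.ncard ≤ k ∧
          ∀ y : Fin N → ℝ, {i | y i ≠ 0}.ncard ≤ k →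
            ‖(∑ i, x i • A i) - (b : EuclideanSpace ℝ (Fin m))‖ ≤
              ‖(∑ i, y i • A i) - (b : EuclideanSpace ℝ (Fin m))‖} ≠ 0 := by
  classical
  obtain ⟨S, hScard, V₀, hV₀lt, hmax, hreps⟩ := reverse_setup A k hA0 hspark
  set 𝒯 : Finset (Finset (Fin N)) :=
    Finset.univ.filter (fun T => T.card ≤ k ∧ Vs A T ≠ Vs A S) with h𝒯
  set U : Set (EuclideanSpace ℝ (Fin m)) :=
    (⋂ T ∈ 𝒯, {b : EuclideanSpace ℝ (Fin m) |
      ‖b - pr (Vs A S) b‖ < ‖b - pr (Vs A T) b‖}) ∩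
    (pr (Vs A S)) ⁻¹' ((V₀ : Set (EuclideanSpace ℝ (Fin m))))ᶜ with hU
  have hUopen : IsOpen U := by
    apply IsOpen.inter
    · refine isOpen_biInter_finset (fun T _ => ?_)
      exact isOpen_lt ((continuous_id.sub (pr (Vs A S)).continuous).norm)
        ((continuous_id.sub (pr (Vs A T)).continuous).norm)
    · exact (V₀.closed_of_finiteDimensional).isOpen_compl.preimage (pr (Vs A S)).continuous
  -- pick the generic point z₀
  have hVSnebot : Vs A S ≠ ⊥ := by
    intro h
    rw [h] at hV₀lt
    exact not_lt_bot hV₀lt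
  set 𝒲 : Finset (Submodule ℝ (EuclideanSpace ℝ (Fin m))) := insert V₀ (𝒯.image (Vs A)) with h𝒲
  have h𝒲prop : ∀ W ∈ 𝒲, ¬ Vs A S ≤ W := by
    intro W hW
    rcases Finset.mem_insert.mp hW with rfl | hW
    · exact fun hle => absurd (le_antisymm hV₀lt.le hle) hV₀lt.ne
    · obtain ⟨T, hT, rfl⟩ := Finset.mem_image.mp hW
      rw [h𝒯] at hT
      have h1 := (Finset.mem_filter.mp hT).2
      rcases hmax T h1.1 with heq | hnle
      · exact absurd heq h1.2
      · exact hnle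
  obtain ⟨z₀, hz₀mem, hz₀norm, hz₀avoid⟩ := exists_unit_avoid (Vs A S) hVSnebot 𝒲 h𝒲prop
  have hz₀V₀ : z₀ ∉ V₀ := hz₀avoid V₀ (Finset.mem_insert_self _ _)
  -- z₀ is on the sphere and in U
  have hz₀U : z₀ ∈ U := by
    rw [hU]
    constructor
    · rw [Set.mem_iInter₂]
      intro T hT
      simp only [Set.mem_setOf_eq]
      rw [pr_eq_self (Vs A S) hz₀mem, sub_self, norm_zero]
      have hz₀T : z₀ ∉ Vs A T := hz₀avoid _ (Finset.mem_insert_of_mem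
        (Finset.mem_image.mpr ⟨T, hT, rfl⟩))
      have : ‖z₀ - pr (Vs A T) z₀‖ ≠ 0 := fun h => hz₀T ((pr_mem_iff_dist_zero _ _).mp h)
      exact lt_of_le_of_ne (norm_nonneg _) (Ne.symm this)
    · rw [Set.mem_preimage, pr_eq_self (Vs A S) hz₀mem]
      exact hz₀V₀
  set b₀ : Metric.sphere (0 : EuclideanSpace ℝ (Fin m)) 1 :=
    ⟨z₀, by simp [mem_sphere_iff_norm, hz₀norm]⟩ with hb₀
  have hkey := toSphere_ne_zero_of_open hm hUopen b₀ hz₀U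
  intro hzero
  apply hkey
  refine measure_mono_null ?_ hzero
  -- every sphere point of U is a point of non-uniqueness
  rintro b hbU
  simp only [Set.mem_setOf_eq] at hbU ⊢
  rw [hU] at hbU
  obtain ⟨hb1, hb2⟩ := hbU
  set z : EuclideanSpace ℝ (Fin m) := pr (Vs A S) (b : EuclideanSpace ℝ (Fin m)) with hz
  have hzmem : z ∈ Vs A S := pr_mem _ _
  have hzV₀ : z ∉ V₀ := hb2
  obtain ⟨x, x', hxx', hxcard, hx'card, hxsum, hx'sum⟩ := hreps z hzmem hzV₀
  have hminprop : ∀ w : Fin N → ℝ, ∑ i, w i • A i = z →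
      ∀ y : Fin N → ℝ, {i | y i ≠ 0}.ncard ≤ k →
        ‖(∑ i, w i • A i) - (b : EuclideanSpace ℝ (Fin m))‖ ≤
          ‖(∑ i, y i • A i) - (b : EuclideanSpace ℝ (Fin m))‖ := by
    intro w hwsum y hy
    rw [hwsum]
    have hTcard : (suppF y).card ≤ k := by rw [← ncard_eq_suppF]; exact hy
    have hAy : ∑ i, y i • A i ∈ Vs A (suppF y) :=
      sum_smul_mem A y (suppF y) (fun i hi => mem_suppF.mpr hi)
    rw [norm_sub_rev z _, norm_sub_rev _ (b : EuclideanSpace ℝ (Fin m))]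
    by_cases hVeq : Vs A (suppF y) = Vs A S
    · rw [hVeq] at hAy
      exact pr_dist_le _ _ hAy
    · have hT𝒯 : suppF y ∈ 𝒯 := by
        rw [h𝒯]; exact Finset.mem_filter.mpr ⟨Finset.mem_univ _, hTcard, hVeq⟩
      have hlt := Set.mem_iInter₂.mp hb1 (suppF y) hT𝒯
      simp only [Set.mem_setOf_eq] at hlt
      calc ‖(b : EuclideanSpace ℝ (Fin m)) - z‖
          ≤ ‖(b : EuclideanSpace ℝ (Fin m)) - pr (Vs A (suppF y)) b‖ := le_of_lt hlt
        _ ≤ ‖(b : EuclideanSpace ℝ (Fin m)) - ∑ i, y i • A i‖ := pr_dist_le _ _ hAy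
  rintro ⟨xx, _, huniq⟩
  have h1 : x = xx := huniq x ⟨hxcard, hminprop x hxsum⟩
  have h2 : x' = xx := huniq x' ⟨hx'card, hminprop x' hx'sum⟩
  exact hxx' (h1.trans h2.symm)

end Assembly

/-- For `b` drawn uniformly from the unit sphere of `ℝ^m`, the optimal `k`-sparse
approximation `argmin_{‖x‖₀ ≤ k} ‖Ax - b‖₂` is unique with probability 1 if and only if
`k < spark(A) - 1` (every `k+1` columns independent); otherwise uniqueness fails on a set of
positive measure. -/
theorem unique_sparse_solution_ae_iff {m N : ℕ} (hm : 0 < m)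
    (A : Fin N → EuclideanSpace ℝ (Fin m)) (k : ℕ)
    (hunit : ∀ i, ‖A i‖ = 1)
    (hspan : Submodule.span ℝ (Set.range A) = ⊤)
    (hk1 : 1 ≤ k) (hkN : k ≤ N) :
    (volume : Measure (EuclideanSpace ℝ (Fin m))).toSphere
      {b : Metric.sphere (0 : EuclideanSpace ℝ (Fin m)) 1 |
        ¬ ∃! x : Fin N → ℝ, {i | x i ≠ 0}.ncard ≤ k ∧
          ∀ y : Fin N → ℝ, {i | y i ≠ 0}.ncard ≤ k →
            ‖(∑ i, x i • A i) - (b : EuclideanSpace ℝ (Fin m))‖ ≤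
              ‖(∑ i, y i • A i) - (b : EuclideanSpace ℝ (Fin m))‖} = 0 ↔
    (k : ℕ∞) < spark A - 1 := by
  constructor
  · intro hmeas
    by_contra hnot
    have hle : spark A - 1 ≤ (k : ℕ∞) := le_of_not_gt hnot
    have hspark : spark A ≤ (k : ℕ∞) + 1 := tsub_le_iff_right.mp hle
    have hA0 : ∀ i, A i ≠ 0 := by
      intro i h
      have := hunit i
      rw [h, norm_zero] at this
      norm_num at this
    exact reverse_nonzero hm A k hA0 hspark hmeas
  · intro hlt
    have hindep : ∀ S : Finset (Fin N), S.card ≤ k + 1 →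
        LinearIndependent ℝ (fun i : S => A i) := by
      intro S hS
      by_contra hdep
      have h1 : spark A ≤ (S.card : ℕ∞) := spark_le A hdep
      have h2 : (S.card : ℕ∞) ≤ ((k : ℕ∞) + 1) := by
        have : ((k : ℕ∞) + 1) = ((k + 1 : ℕ) : ℕ∞) := by push_cast; rfl
        rw [this]
        exact_mod_cast hS
      have h3 : spark A - 1 ≤ (k : ℕ∞) := tsub_le_iff_right.mpr (le_trans h1 h2)
      exact absurd hlt (not_lt.mpr h3)
    exact forward_null A k hindep
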